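/- Let m and n be distinct positive integers, let s be a nonempty finite sequence of positive integers, let k > 0, and let t be a sequence in {m, n}^k. Then C_{m,n}(s^r, t) = t, where r = 2^{⌈k/2⌉} and s^r denotes the concatenation of r copies of s. Consequently, the orbit of t under the bijection t ↦ C_{m,n}(s, t) on {m, n}^k has length dividing 2^{⌈k/2⌉}, so in particular at most 2^{⌈k/2⌉}. -/

import Mathlib

/-- `expand1 m n x s` : the expansion `E_{m,n}(s, x)` of the finite sequence `s` with the
single starting point `x ∈ {m, n}`: the unique sequence with values in `{m, n}`, first term
`x`, and run-lengths `s`. -/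
def expand1 (m n : ℕ) : ℕ → List ℕ → List ℕ
  | _, [] => []
  | x, a :: l => List.replicate a x ++ expand1 m n (m + n - x) l

/-- `expand m n s t` : the expansion `E_{m,n}(s, t)` of the finite sequence `s` with the
finite sequence of starting points `t` (values in `{m, n}`), defined by
`E_{m,n}(s, t₁ t') = E_{m,n}(E_{m,n}(s, t₁), t')`. -/
def expand (m n : ℕ) : List ℕ → List ℕ → List ℕ
  | s, [] => s
  | s, x :: t => expand m n (expand1 m n x s) t

/-- `torsion m n s t` : the torsion `C_{m,n}(s, t)`, the sequence of the same length as `t`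
whose `k`-th term equals `m + n` minus the last term of `E_{m,n}(s, t⁽ᵏ⁾)`, where `t⁽ᵏ⁾`
consists of the first `k` terms of `t`. -/
def torsion (m n : ℕ) (s t : List ℕ) : List ℕ :=
  (List.range t.length).map fun k => m + n - (expand m n s (t.take (k + 1))).getLastD 0

namespace TorsionAux

variable {m n : ℕ}

lemma expand1_ne_nil {x : ℕ} {w : List ℕ} (hw : w ≠ []) (hp : ∀ a ∈ w, 0 < a) :
    expand1 m n x w ≠ [] := by
  cases w with
  | nil => exact absurd rfl hw
  | cons a l =>
    have ha : 0 < a := hp a (by simp)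
    simp only [expand1, ne_eq, List.append_eq_nil_iff, List.replicate_eq_nil_iff]
    rintro ⟨h1, -⟩
    omega

lemma length_expand1 (x : ℕ) (w : List ℕ) : (expand1 m n x w).length = w.sum := by
  induction w generalizing x with
  | nil => simp [expand1]
  | cons a l ih => simp [expand1, ih]

lemma mem_expand1 {x : ℕ} (hx : x = m ∨ x = n) {w : List ℕ} :
    ∀ y ∈ expand1 m n x w, y = m ∨ y = n := by
  induction w generalizing x with
  | nil => simp [expand1]
  | cons a l ih =>
    intro y hy
    simp only [expand1, List.mem_append] at hy
    rcases hy with hy | hy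
    · rcases List.eq_of_mem_replicate hy; exact hx
    · exact ih (by omega) y hy

lemma getLastD_ne_nil {v : List ℕ} (hv : v ≠ []) (d d' : ℕ) :
    v.getLastD d = v.getLastD d' := by
  cases v with
  | nil => exact absurd rfl hv
  | cons a l => rfl

lemma getLastD_append {u v : List ℕ} (hv : v ≠ []) (d : ℕ) :
    (u ++ v).getLastD d = v.getLastD d := by
  induction u generalizing d with
  | nil => rfl
  | cons a u ih =>
    rw [List.cons_append, List.getLastD_cons, ih a]
    exact getLastD_ne_nil hv a d

lemma getLastD_replicate {a : ℕ} (ha : 0 < a) (x d : ℕ) :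
    (List.replicate a x).getLastD d = x := by
  induction a generalizing d with
  | zero => omega
  | succ a ih =>
    rw [List.replicate_succ, List.getLastD_cons]
    rcases Nat.eq_zero_or_pos a with rfl | h
    · simp
    · exact ih h x

lemma getLastD_expand1 {x : ℕ} (hx : x = m ∨ x = n) {w : List ℕ} (hw : w ≠ [])
    (hp : ∀ a ∈ w, 0 < a) (hm : 0 < m) (hn : 0 < n) :
    (expand1 m n x w).getLastD 0 = if Even w.length then m + n - x else x := by
  induction w generalizing x with
  | nil => exact absurd rfl hw
  | cons a l ih =>
    have ha : 0 < a := hp a (by simp)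
    by_cases hl : l = []
    · subst hl
      show (List.replicate a x ++ expand1 m n (m + n - x) []).getLastD 0 = _
      rw [show expand1 m n (m+n-x) [] = [] from rfl, List.append_nil,
          getLastD_replicate ha]
      norm_num
    · have hlp : ∀ b ∈ l, 0 < b := fun b hb => hp b (by simp [hb])
      show (List.replicate a x ++ expand1 m n (m + n - x) l).getLastD 0 = _
      rw [getLastD_append (expand1_ne_nil hl hlp), ih (by omega) hl hlp]
      simp only [List.length_cons, Nat.even_add_one]
      by_cases h : Even l.length <;> simp [h] <;> omega

lemma expand1_append {x : ℕ} (hx : x = m ∨ x = n) (a b : List ℕ) :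
    expand1 m n x (a ++ b) =
      expand1 m n x a ++ expand1 m n (if Even a.length then x else m + n - x) b := by
  induction a generalizing x with
  | nil => simp [expand1]
  | cons c l ih =>
    show List.replicate c x ++ expand1 m n (m + n - x) (l ++ b) = _
    rw [ih (by omega)]
    have hcongr : expand1 m n (if Even l.length then m + n - x else m + n - (m + n - x)) b
        = expand1 m n (if Even (c :: l).length then x else m + n - x) b := by
      congr 1
      simp only [List.length_cons, Nat.even_add_one]
      by_cases h : Even l.length <;> simp [h] <;> omega
    rw [hcongr]
    show _ = (List.replicate c x ++ expand1 m n (m + n - x) l) ++ _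
    rw [List.append_assoc]

lemma expand1_flatten_replicate {x : ℕ} (hx : x = m ∨ x = n) {w : List ℕ}
    (hw : Even w.length) (p : ℕ) :
    expand1 m n x (List.replicate p w).flatten
      = (List.replicate p (expand1 m n x w)).flatten := by
  induction p with
  | zero => simp [expand1]
  | succ p ih =>
    rw [List.replicate_succ, List.flatten_cons, expand1_append hx, if_pos hw, ih,
        List.replicate_succ, List.flatten_cons]

lemma flatten_replicate_two_mul (p : ℕ) (w : List ℕ) :
    (List.replicate (2 * p) w).flatten = (List.replicate p (w ++ w)).flatten := by
  induction p with
  | zero => simp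
  | succ p ih =>
    rw [show 2 * (p + 1) = (2 * p) + 1 + 1 by ring, List.replicate_succ,
        List.replicate_succ, List.flatten_cons, List.flatten_cons, ih,
        List.replicate_succ, List.flatten_cons, ← List.append_assoc]

lemma length_flatten_replicate (p : ℕ) (w : List ℕ) :
    (List.replicate p w).flatten.length = p * w.length := by
  induction p with
  | zero => simp
  | succ p ih =>
    rw [List.replicate_succ, List.flatten_cons, List.length_append, ih]; ring

lemma mem_flatten_replicate_pos {p : ℕ} {w : List ℕ} (hp : ∀ a ∈ w, 0 < a) :
    ∀ a ∈ (List.replicate p w).flatten, 0 < a := by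
  intro a ha
  rw [List.mem_flatten] at ha
  obtain ⟨l, hl, hal⟩ := ha
  rcases List.eq_of_mem_replicate hl
  exact hp a hal

/-- `EvenChain m n u t` : each successive expansion of `u` along `t` (before the last)
has even length. -/
def EvenChain (m n : ℕ) : List ℕ → List ℕ → Prop
  | _, [] => True
  | u, x :: t => Even u.length ∧ EvenChain m n (expand1 m n x u) t

lemma evenChain_flatten (hm : 0 < m) (hn : 0 < n) :
    ∀ (t : List ℕ), (∀ a ∈ t, a = m ∨ a = n) →
    ∀ (c : ℕ) (w : List ℕ), w ≠ [] → (∀ a ∈ w, 0 < a) →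
    t.length ≤ 2 * c + (if Even w.length then 1 else 0) →
    EvenChain m n (List.replicate (2 ^ c) w).flatten t := by
  intro t
  induction t with
  | nil => intro _ c w _ _ _; trivial
  | cons x t ih =>
    intro htv c w hw hwp hlen
    have hx : x = m ∨ x = n := htv x (by simp)
    have hwp' : ∀ a ∈ expand1 m n x w, 0 < a := by
      intro a ha; rcases mem_expand1 hx a ha with rfl | rfl <;> assumption
    by_cases hev : Even w.length
    · rw [if_pos hev] at hlen
      constructor
      · rw [length_flatten_replicate]
        exact hev.mul_left _
      · rw [expand1_flatten_replicate hx hev]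
        apply ih (fun a ha => htv a (by simp [ha])) c (expand1 m n x w)
          (expand1_ne_nil hw hwp) hwp'
        have : t.length ≤ 2 * c := by
          have := hlen; simp only [List.length_cons] at this; omega
        split_ifs <;> omega
    · rw [if_neg hev] at hlen
      have hc : 0 < c := by
        simp only [List.length_cons] at hlen; omega
      obtain ⟨c', rfl⟩ : ∃ c', c = c' + 1 := ⟨c - 1, by omega⟩
      constructor
      · rw [length_flatten_replicate]
        simp only [Nat.even_mul, Nat.even_pow]
        left; exact ⟨even_two, by omega⟩
      · have hww : Even (w ++ w).length := by
          rw [List.length_append]; exact ⟨w.length, by ring⟩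
        rw [show (2:ℕ) ^ (c' + 1) = 2 * 2 ^ c' by ring, flatten_replicate_two_mul,
            expand1_flatten_replicate hx hww]
        have hwwp : ∀ a ∈ w ++ w, 0 < a := by
          intro a ha; rw [List.mem_append] at ha; rcases ha with h | h <;> exact hwp a h
        have hwwne : w ++ w ≠ [] := by
          intro h; rw [List.append_eq_nil_iff] at h; exact hw h.1
        have hwwp' : ∀ a ∈ expand1 m n x (w ++ w), 0 < a := by
          intro a ha; rcases mem_expand1 hx a ha with rfl | rfl <;> assumption
        apply ih (fun a ha => htv a (by simp [ha])) c' (expand1 m n x (w ++ w))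
          (expand1_ne_nil hwwne hwwp) hwwp'
        have hlenE : Even (expand1 m n x (w ++ w)).length := by
          rw [length_expand1, List.sum_append]
          exact ⟨w.sum, by ring⟩
        rw [if_pos hlenE]
        simp only [List.length_cons] at hlen
        omega

lemma torsion_cons (u : List ℕ) (x : ℕ) (t : List ℕ) :
    torsion m n u (x :: t) =
      (m + n - (expand1 m n x u).getLastD 0) :: torsion m n (expand1 m n x u) t := by
  unfold torsion
  rw [List.length_cons, List.range_succ_eq_map, List.map_cons, List.map_map]
  rfl

lemma torsion_length (u t : List ℕ) : (torsion m n u t).length = t.length := by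
  simp [torsion]

lemma torsion_mem (hm : 0 < m) (hn : 0 < n) :
    ∀ (t : List ℕ), (∀ a ∈ t, a = m ∨ a = n) →
    ∀ (u : List ℕ), u ≠ [] → (∀ a ∈ u, 0 < a) →
    ∀ y ∈ torsion m n u t, y = m ∨ y = n := by
  intro t
  induction t with
  | nil => intro _ u _ _ y hy; simp [torsion] at hy
  | cons x t ih =>
    intro htv u hu hup y hy
    have hx : x = m ∨ x = n := htv x (by simp)
    rw [torsion_cons] at hy
    rcases List.mem_cons.1 hy with rfl | hy
    · rw [getLastD_expand1 hx hu hup hm hn]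
      split_ifs <;> omega
    · have hup' : ∀ a ∈ expand1 m n x u, 0 < a := by
        intro a ha; rcases mem_expand1 hx a ha with rfl | rfl <;> assumption
      exact ih (fun a ha => htv a (by simp [ha])) _ (expand1_ne_nil hu hup) hup' y hy

lemma torsion_eq_of_evenChain (hm : 0 < m) (hn : 0 < n) :
    ∀ (t : List ℕ), (∀ a ∈ t, a = m ∨ a = n) →
    ∀ (u : List ℕ), u ≠ [] → (∀ a ∈ u, 0 < a) → EvenChain m n u t →
    torsion m n u t = t := by
  intro t
  induction t with
  | nil => intro _ u _ _ _; rfl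
  | cons x t ih =>
    intro htv u hu hup hch
    obtain ⟨hev, hch'⟩ := hch
    have hx : x = m ∨ x = n := htv x (by simp)
    rw [torsion_cons, getLastD_expand1 hx hu hup hm hn, if_pos hev]
    have hup' : ∀ a ∈ expand1 m n x u, 0 < a := by
      intro a ha; rcases mem_expand1 hx a ha with rfl | rfl <;> assumption
    rw [ih (fun a ha => htv a (by simp [ha])) _ (expand1_ne_nil hu hup) hup' hch']
    congr 1
    omega

lemma torsion_append (hm : 0 < m) (hn : 0 < n) :
    ∀ (t : List ℕ), (∀ a ∈ t, a = m ∨ a = n) →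
    ∀ (a b : List ℕ), a ≠ [] → b ≠ [] → (∀ x ∈ a, 0 < x) → (∀ x ∈ b, 0 < x) →
    torsion m n (a ++ b) t = torsion m n b (torsion m n a t) := by
  intro t
  induction t with
  | nil => intros; rfl
  | cons x t ih =>
    intro htv a b ha hb hap hbp
    have hx : x = m ∨ x = n := htv x (by simp)
    have hgl : (expand1 m n x a).getLastD 0 = if Even a.length then m + n - x else x :=
      getLastD_expand1 hx ha hap hm hn
    set y := m + n - (expand1 m n x a).getLastD 0 with hy
    have hyv : y = m ∨ y = n := by
      rw [hy, hgl]
      split_ifs <;> omega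
    have hl : (if Even a.length then x else m + n - x) = y := by
      rw [hy, hgl]
      split_ifs <;> omega
    have hflip : expand1 m n x (a ++ b) = expand1 m n x a ++ expand1 m n y b := by
      rw [expand1_append hx, hl]
    have hap' : ∀ z ∈ expand1 m n x a, 0 < z := by
      intro z hz; rcases mem_expand1 hx z hz with rfl | rfl <;> assumption
    have hbp' : ∀ z ∈ expand1 m n y b, 0 < z := by
      intro z hz; rcases mem_expand1 hyv z hz with rfl | rfl <;> assumption
    rw [torsion_cons, hflip, torsion_cons, ← hy, torsion_cons]
    congr 1
    · rw [getLastD_append (expand1_ne_nil hb hbp)]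
    · exact ih (fun z hz => htv z (by simp [hz])) _ _ (expand1_ne_nil ha hap)
        (expand1_ne_nil hb hbp) hap' hbp'

lemma torsion_flatten (hm : 0 < m) (hn : 0 < n) (s : List ℕ) (hs : s ≠ [])
    (hsp : ∀ a ∈ s, 0 < a) :
    ∀ (r : ℕ), 0 < r → ∀ (t : List ℕ), (∀ a ∈ t, a = m ∨ a = n) →
    torsion m n (List.replicate r s).flatten t = (torsion m n s)^[r] t := by
  intro r
  induction r with
  | zero => omega
  | succ r ih =>
    intro _ t htv
    rcases Nat.eq_zero_or_pos r with rfl | hr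
    · simp [Function.iterate_one]
    · have hfne : (List.replicate r s).flatten ≠ [] := by
        apply List.length_pos_iff.mp
        rw [length_flatten_replicate]
        exact Nat.mul_pos hr (List.length_pos_iff.mpr hs)
      rw [List.replicate_succ, List.flatten_cons,
          torsion_append hm hn t htv s _ hs hfne hsp (mem_flatten_replicate_pos hsp),
          ih hr _ (torsion_mem hm hn t htv s hs hsp), Function.iterate_succ_apply]


lemma main_result (m n : ℕ) (hm : 0 < m) (hn : 0 < n)
    (s : List ℕ) (hs : s ≠ []) (hsp : ∀ a ∈ s, 0 < a) (k : ℕ) (hk : 0 < k)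
    (t : List ℕ) (htl : t.length = k) (htv : ∀ a ∈ t, a = m ∨ a = n) :
    torsion m n (List.replicate (2 ^ ((k + 1) / 2)) s).flatten t = t ∧
    Function.minimalPeriod (torsion m n s) t ∣ 2 ^ ((k + 1) / 2) ∧
    Function.minimalPeriod (torsion m n s) t ≤ 2 ^ ((k + 1) / 2) := by
  set c := (k + 1) / 2 with hc
  have hfp : ∀ a ∈ (List.replicate (2 ^ c) s).flatten, 0 < a :=
    mem_flatten_replicate_pos hsp
  have hfne : (List.replicate (2 ^ c) s).flatten ≠ [] := by
    apply List.length_pos_iff.mp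
    rw [length_flatten_replicate]
    exact Nat.mul_pos (Nat.pow_pos (n := c) (by norm_num)) (List.length_pos_iff.mpr hs)
  have h1 : torsion m n (List.replicate (2 ^ c) s).flatten t = t := by
    apply torsion_eq_of_evenChain hm hn t htv _ hfne hfp
    apply evenChain_flatten hm hn t htv c s hs hsp
    have hkb : t.length ≤ 2 * c := by rw [htl, hc]; omega
    split_ifs <;> omega
  have h2 : Function.IsPeriodicPt (torsion m n s) (2 ^ c) t := by
    show (torsion m n s)^[2 ^ c] t = t
    rw [← torsion_flatten hm hn s hs hsp (2 ^ c) (Nat.pow_pos (n := c) (by norm_num)) t htv]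
    exact h1
  exact ⟨h1, h2.minimalPeriod_dvd,
    Nat.le_of_dvd (Nat.pow_pos (n := c) (by norm_num)) h2.minimalPeriod_dvd⟩

end TorsionAux

/-- For `t ∈ {m, n}^k` and `r = 2^⌈k/2⌉`, `C_{m,n}(s^r, t) = t`; consequently the orbit
of `t` under `t ↦ C_{m,n}(s, t)` has length dividing `2^⌈k/2⌉`, in particular at most
`2^⌈k/2⌉`. -/
theorem torsion_orbit_length_le (m n : ℕ) (hm : 0 < m) (hn : 0 < n) (hmn : m ≠ n)
    (s : List ℕ) (hs : s ≠ []) (hsp : ∀ a ∈ s, 0 < a) (k : ℕ) (hk : 0 < k)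
    (t : List ℕ) (htl : t.length = k) (htv : ∀ a ∈ t, a = m ∨ a = n) :
    torsion m n (List.replicate (2 ^ ((k + 1) / 2)) s).flatten t = t ∧
    Function.minimalPeriod (torsion m n s) t ∣ 2 ^ ((k + 1) / 2) ∧
    Function.minimalPeriod (torsion m n s) t ≤ 2 ^ ((k + 1) / 2) := by
  open TorsionAux in
  exact main_result m n hm hn s hs hsp k hk t htl htv
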